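/- If A is an N×N Hermitian matrix, 3-PMP, with all entries of modulus 0 or 1, then there exist a diagonal matrix D with unimodular diagonal entries and a permutation matrix Q such that (QD)^{-1} A (QD) is block-diagonal with each diagonal block either an all-ones square matrix or an all-zeros square matrix. -/

import Mathlib

open Matrix
open scoped ComplexOrder

/-- A Hermitian matrix is `k`-PMP if all its principal minors of size at most `k`
are non-negative. -/
def kPMP {N : ℕ} (k : ℕ) (A : Matrix (Fin N) (Fin N) ℂ) : Prop :=
  ∀ S : Finset (Fin N), S.card ≤ k →
    0 ≤ (A.submatrix (fun i : S => (i : Fin N)) (fun i : S => (i : Fin N))).det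

set_option linter.unusedSectionVars false

lemma pmp_inj {N : ℕ} {A : Matrix (Fin N) (Fin N) ℂ} (h3 : kPMP 3 A) {m : ℕ} (hm : m ≤ 3)
    (f : Fin m → Fin N) (hf : Function.Injective f) : 0 ≤ (A.submatrix f f).det := by
  set S : Finset (Fin N) := Finset.univ.map ⟨f, hf⟩ with hS
  have hmem : ∀ x, f x ∈ S := by intro x; simp [hS]
  have hsurj : ∀ y : S, ∃ x, f x = (y : Fin N) := by
    intro ⟨y, hy⟩; simpa [hS] using hy
  let e : Fin m ≃ S := Equiv.ofBijective (fun x => ⟨f x, hmem x⟩)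
    ⟨fun a b hab => hf (by simpa using hab), fun y => by
      obtain ⟨x, hx⟩ := hsurj y; exact ⟨x, by simpa using Subtype.ext hx⟩⟩
  have key : (A.submatrix (fun i : S => (i : Fin N)) (fun i : S => (i : Fin N))).submatrix e e
      = A.submatrix f f := rfl
  have hcard : S.card ≤ 3 := by simp [hS]; omega
  have := h3 S hcard
  rw [← Matrix.det_submatrix_equiv_self e, key] at this
  exact this

lemma hconj {N : ℕ} {A : Matrix (Fin N) (Fin N) ℂ} (hA : A.IsHermitian) (i j : Fin N) :
    A j i = (starRingEnd ℂ) (A i j) := (hA.apply j i).symm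

section
variable {N : ℕ} {A : Matrix (Fin N) (Fin N) ℂ} (hA : A.IsHermitian)
    (h01 : ∀ i j, ‖A i j‖ = 0 ∨ ‖A i j‖ = 1)
    (h3 : kPMP 3 A)

include hA h01 h3

lemma Ldiag : ∀ i, A i i = 0 ∨ A i i = 1 := by
  intro i
  have h1 : 0 ≤ (A.submatrix ![i] ![i]).det :=
    pmp_inj h3 (by norm_num) _ (fun a b _ => Subsingleton.elim a b)
  rw [Matrix.det_fin_one] at h1
  simp only [Matrix.submatrix_apply] at h1
  rcases h01 i i with h | h
  · left; exact norm_eq_zero.mp h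
  · right
    have him : (A i i).im = 0 := ((Complex.le_def).mp h1).2.symm
    have hre : 0 ≤ (A i i).re := by simpa using ((Complex.le_def).mp h1).1
    have : ‖A i i‖ = |(A i i).re| := by
      rw [Complex.norm_def, Complex.normSq_apply, him]
      simp [Real.sqrt_mul_self_eq_abs]
    rw [this, abs_of_nonneg hre] at h
    exact Complex.ext h him

lemma L2 {i j : Fin N} (hne : i ≠ j) (hij : A i j ≠ 0) : A i i = 1 ∧ A j j = 1 := by
  have hinj : Function.Injective ![i, j] := by
    intro a b hab
    fin_cases a <;> fin_cases b <;> simp_all <;> exact absurd hab (by simpa using hne.symm)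
  have h2 : 0 ≤ (A.submatrix ![i,j] ![i,j]).det := pmp_inj h3 (by norm_num) _ hinj
  rw [Matrix.det_fin_two] at h2
  simp only [Matrix.submatrix_apply, Matrix.cons_val_zero, Matrix.cons_val_one,
    Matrix.head_cons] at h2
  have habs : ‖A i j‖ = 1 := (h01 i j).resolve_left (fun h => hij (by simpa using h))
  have hmul : A i j * A j i = 1 := by
    rw [hconj hA i j, Complex.mul_conj, ← Complex.sq_norm, habs]; norm_num
  rw [hmul] at h2
  rcases Ldiag hA h01 h3 i with hi | hi <;> rcases Ldiag hA h01 h3 j with hj | hj <;>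
      rw [hi, hj] at h2
  · exact absurd (by simpa using (Complex.le_def.mp h2).1) (by norm_num)
  · exact absurd (by simpa using (Complex.le_def.mp h2).1) (by norm_num)
  · exact absurd (by simpa using (Complex.le_def.mp h2).1) (by norm_num)
  · exact ⟨hi, hj⟩

lemma L3 {i j k : Fin N} (hij' : i ≠ j) (hjk' : j ≠ k) (hik' : i ≠ k)
    (hij : A i j ≠ 0) (hjk : A j k ≠ 0) : A i k = A i j * A j k := by
  have hi : A i i = 1 := (L2 hA h01 h3 hij' hij).1
  have hj : A j j = 1 := (L2 hA h01 h3 hij' hij).2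
  have hk : A k k = 1 := (L2 hA h01 h3 hjk' hjk).2
  have ha : ‖A i j‖ = 1 := (h01 i j).resolve_left (fun h => hij (by simpa using h))
  have hb : ‖A j k‖ = 1 := (h01 j k).resolve_left (fun h => hjk (by simpa using h))
  have hinj : Function.Injective ![i, j, k] := by
    intro a b hab
    fin_cases a <;> fin_cases b <;> simp_all [hij', hjk', hik'] <;>
      first
      | exact absurd hab (by simpa using hij'.symm)
      | exact absurd hab (by simpa using hjk'.symm)
      | exact absurd hab (by simpa using hik'.symm)
  have hd : 0 ≤ (A.submatrix ![i,j,k] ![i,j,k]).det := pmp_inj h3 le_rfl _ hinj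
  rw [Matrix.det_fin_three] at hd
  simp only [Matrix.submatrix_apply, Matrix.cons_val_zero, Matrix.cons_val_one,
    Matrix.head_cons, Matrix.cons_val_two, Matrix.tail_cons, Matrix.head_fin_const] at hd
  set a := A i j with hadef
  set b := A j k with hbdef
  set c := A i k with hcdef
  rw [hi, hj, hk, hconj hA i j, hconj hA j k, hconj hA i k] at hd
  set z := a * b * (starRingEnd ℂ) c with hz
  have hzabs : ‖z‖ = ‖c‖ := by
    simp [hz, _root_.map_mul, ha, hb]
  have h1c : b * (starRingEnd ℂ) b = 1 := by
    rw [Complex.mul_conj, ← Complex.sq_norm, hb]; norm_num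
  have h2c : a * (starRingEnd ℂ) a = 1 := by
    rw [Complex.mul_conj, ← Complex.sq_norm, ha]; norm_num
  have h3c : c * (starRingEnd ℂ) c = ((‖c‖ : ℝ) : ℂ) ^ 2 := by
    rw [Complex.mul_conj, ← Complex.sq_norm]; push_cast; ring
  have e1 : (starRingEnd ℂ) z = c * (starRingEnd ℂ) a * (starRingEnd ℂ) b := by
    rw [hz]; simp only [_root_.map_mul, Complex.conj_conj]; ring
  have h5 : z + (starRingEnd ℂ) z = 2 * ((z.re : ℝ) : ℂ) := by
    rw [Complex.add_conj]; push_cast; ring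
  have hdet : (1*1*1 - 1*b*((starRingEnd ℂ) b) - a * ((starRingEnd ℂ) a) * 1
      + a * b * ((starRingEnd ℂ) c) + c * ((starRingEnd ℂ) a) * ((starRingEnd ℂ) b)
      - c * 1 * ((starRingEnd ℂ) c))
      = ((2 * z.re - 1 - ‖c‖ ^ 2 : ℝ) : ℂ) := by
    push_cast
    linear_combination h5 - e1 - h1c - h2c - h3c
  rw [hdet] at hd
  have hre : 1 + ‖c‖ ^ 2 ≤ 2 * z.re := by
    have := Complex.zero_le_real.mp hd; linarith
  have hzre : z.re ≤ ‖c‖ := hzabs ▸ Complex.re_le_norm z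
  have hc1 : ‖c‖ = 1 := by nlinarith
  rw [hc1] at hzre
  have hzre1 : z.re = 1 := by nlinarith
  have hzim : z.im = 0 := by
    have hsq : z.re ^ 2 + z.im ^ 2 = 1 := by
      have := Complex.sq_norm z
      rw [hzabs, hc1, Complex.normSq_apply] at this
      nlinarith
    nlinarith
  have hz1 : z = 1 := Complex.ext (by simp [hzre1]) (by simp [hzim])
  have hcc : (starRingEnd ℂ) c * c = 1 := by
    rw [mul_comm, Complex.mul_conj, ← Complex.sq_norm, hc1]; norm_num
  linear_combination (a*b)*hcc - c*hz1 + c*hz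

lemma L0 {i j : Fin N} (hi : A i i = 0) : A i j = 0 := by
  by_contra h
  rcases eq_or_ne i j with rfl | hne
  · exact h hi
  · exact absurd (L2 hA h01 h3 hne h).1 (by rw [hi]; norm_num)
end

open Classical in
/-- the minimal element of the "class" of `i` -/
noncomputable def repf {N : ℕ} (A : Matrix (Fin N) (Fin N) ℂ) (i : Fin N) : Fin N :=
  (Finset.univ.filter (fun j => i = j ∨ A i j ≠ 0)).min' ⟨i, by simp⟩

open Classical in
noncomputable def uf {N : ℕ} (A : Matrix (Fin N) (Fin N) ℂ) (p : Fin N) : ℂ :=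
  if A (repf A p) p = 0 then 1 else (starRingEnd ℂ) (A (repf A p) p)

lemma min'_congr {α} [LinearOrder α] {s t : Finset α} (h : s = t) (hs : s.Nonempty) :
    s.min' hs = t.min' (h ▸ hs) := by subst h; rfl

section
variable {N : ℕ} {A : Matrix (Fin N) (Fin N) ℂ} (hA : A.IsHermitian)
    (h01 : ∀ i j, ‖A i j‖ = 0 ∨ ‖A i j‖ = 1)
    (h3 : kPMP 3 A)

include hA h01 h3

lemma unimod {x y : Fin N} (h : A x y ≠ 0) : A x y * (starRingEnd ℂ) (A x y) = 1 := by
  have habs : ‖A x y‖ = 1 := (h01 x y).resolve_left (fun h' => h (by simpa using h'))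
  rw [Complex.mul_conj, ← Complex.sq_norm, habs]; norm_num

lemma rsymm {i j : Fin N} (h : i = j ∨ A i j ≠ 0) : j = i ∨ A j i ≠ 0 := by
  rcases h with h | h
  · exact Or.inl h.symm
  · right; rw [hconj hA i j]; simpa using h

lemma rtrans {i j k : Fin N} (h1 : i = j ∨ A i j ≠ 0) (h2 : j = k ∨ A j k ≠ 0) :
    i = k ∨ A i k ≠ 0 := by
  rcases h1 with rfl | h1
  · exact h2
  rcases h2 with rfl | h2
  · exact Or.inr h1
  rcases eq_or_ne i k with rfl | hik
  · exact Or.inl rfl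
  rcases eq_or_ne i j with rfl | hij
  · exact Or.inr h2
  rcases eq_or_ne j k with rfl | hjk
  · exact Or.inr h1
  · right
    rw [L3 hA h01 h3 hij hjk hik h1 h2]
    exact mul_ne_zero h1 h2

lemma hrep_r : ∀ i, i = repf A i ∨ A i (repf A i) ≠ 0 := by
  intro i
  have := Finset.min'_mem (Finset.univ.filter (fun j => i = j ∨ A i j ≠ 0))
    ⟨i, by simp⟩
  simpa [repf] using this

lemma hrep_of_r {i j : Fin N} (h : i = j ∨ A i j ≠ 0) : repf A i = repf A j := by
  classical
  have hfil : (Finset.univ.filter (fun x => i = x ∨ A i x ≠ 0))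
      = (Finset.univ.filter (fun x => j = x ∨ A j x ≠ 0)) := by
    ext x
    simp only [Finset.mem_filter, Finset.mem_univ, true_and]
    constructor
    · exact fun hx => rtrans hA h01 h3 (rsymm hA h01 h3 h) hx
    · exact fun hx => rtrans hA h01 h3 h hx
  exact min'_congr hfil _

lemma hr_of_rep {i j : Fin N} (h : repf A i = repf A j) : i = j ∨ A i j ≠ 0 := by
  have h1 := hrep_r hA h01 h3 i
  have h2 := rsymm hA h01 h3 (hrep_r hA h01 h3 j)
  rw [← h] at h2
  exact rtrans hA h01 h3 h1 h2

lemma uabs : ∀ p, ‖uf A p‖ = 1 := by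
  intro p
  rw [uf]
  split_ifs with h
  · simp
  · rw [Complex.norm_conj]
    exact (h01 _ _).resolve_left (fun h' => h (by simpa using h'))

lemma mul_rep (ρ p q : Fin N) (hρ1 : A ρ ρ = 1) (hαne : A ρ p ≠ 0) (hβne : A ρ q ≠ 0)
    (hApq' : p = q ∨ A p q ≠ 0) : A ρ q = A ρ p * A p q := by
  rcases eq_or_ne p q with rfl | hpq'
  · have hApp : A p p = 1 := by
      rcases eq_or_ne ρ p with rfl | hρp
      · exact hρ1
      · exact (L2 hA h01 h3 hρp hαne).2
    rw [hApp, mul_one]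
  rcases eq_or_ne ρ p with rfl | hρp
  · rw [hρ1, one_mul]
  rcases eq_or_ne ρ q with rfl | hρq
  · have hpρ : A p ρ ≠ 0 := by rw [hconj hA ρ p]; simpa using hαne
    rw [hρ1, hconj hA p ρ, mul_comm]
    exact (unimod hA h01 h3 hpρ).symm
  · exact L3 hA h01 h3 hρp hpq' hρq hαne (hApq'.resolve_left hpq')

lemma key (p q : Fin N) : (uf A p)⁻¹ * A p q * uf A q
    = if repf A p = repf A q then A (repf A p) (repf A p) else 0 := by
  by_cases hpq : repf A p = repf A q
  · rw [if_pos hpq]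
    set ρ := repf A p with hρ
    have hrp : p = ρ ∨ A p ρ ≠ 0 := hrep_r hA h01 h3 p
    have hrq : q = ρ ∨ A q ρ ≠ 0 := by rw [hpq]; exact hrep_r hA h01 h3 q
    rcases Ldiag hA h01 h3 ρ with hρ0 | hρ1
    · -- zero class: singleton
      have hzero : ∀ x, A ρ x = 0 := fun x => L0 hA h01 h3 hρ0
      have hp : p = ρ := by
        rcases hrp with h | h
        · exact h
        · exfalso; apply h; rw [hconj hA ρ p, hzero p]; simp
      have hq : q = ρ := by
        rcases hrq with h | h
        · exact h
        · exfalso; apply h; rw [hconj hA ρ q, hzero q]; simp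
      rw [hp, hq, hzero ρ]
      ring
    · -- one class
      have hαne : A ρ p ≠ 0 := by
        rcases hrp with h | h
        · rw [← h] at hρ1 ⊢; rw [hρ1]; norm_num
        · rw [hconj hA p ρ]; simpa using h
      have hβne : A ρ q ≠ 0 := by
        rcases hrq with h | h
        · rw [← h] at hρ1 ⊢; rw [hρ1]; norm_num
        · rw [hconj hA q ρ]; simpa using h
      have hu_p : uf A p = (starRingEnd ℂ) (A ρ p) := by
        rw [uf, ← hρ, if_neg hαne]
      have hu_q : uf A q = (starRingEnd ℂ) (A ρ q) := by
        rw [uf, ← hpq, if_neg hβne]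
      have hmul : A ρ q = A ρ p * A p q :=
        mul_rep hA h01 h3 ρ p q hρ1 hαne hβne
          (rtrans hA h01 h3 (rsymm hA h01 h3 (Or.inr hαne)) (Or.inr hβne))
      have habsβ : A ρ q * (starRingEnd ℂ) (A ρ q) = 1 := unimod hA h01 h3 hβne
      have habsα : A ρ p * (starRingEnd ℂ) (A ρ p) = 1 := unimod hA h01 h3 hαne
      rw [hu_p, hu_q, ← hρ] at *
      rw [hρ1, inv_eq_of_mul_eq_one_left habsα]
      linear_combination habsβ - (starRingEnd ℂ) (A ρ q) * hmul
  · rw [if_neg hpq]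
    have h0 : A p q = 0 := by
      by_contra h
      exact hpq (hrep_of_r hA h01 h3 (Or.inr h))
    rw [h0]; ring
end


/-- If `A` is Hermitian, `3`-PMP, with all entries of modulus `0` or `1`, then there
exist a diagonal matrix `D` with unimodular diagonal entries and a permutation matrix
`Q = σ.permMatrix ℂ` such that `(Q * D)⁻¹ * A * (Q * D)` is block-diagonal, with each
diagonal block an all-ones or an all-zeros square matrix. -/
theorem stmt1 {N : ℕ} (A : Matrix (Fin N) (Fin N) ℂ) (hA : A.IsHermitian)
    (h01 : ∀ i j, ‖A i j‖ = 0 ∨ ‖A i j‖ = 1)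
    (h3 : kPMP 3 A) :
    ∃ (D : Matrix (Fin N) (Fin N) ℂ) (σ : Equiv.Perm (Fin N)),
      D.IsDiag ∧ (∀ i, ‖D i i‖ = 1) ∧
      ∃ (m : ℕ) (c : Fin N → Fin m) (ε : Fin m → ℂ),
        Monotone c ∧ (∀ b, ε b = 0 ∨ ε b = 1) ∧
        ∀ i j, ((σ.permMatrix ℂ * D)⁻¹ * A * (σ.permMatrix ℂ * D)) i j
          = if c i = c j then ε (c i) else 0 := by
  classical
  set τ : Equiv.Perm (Fin N) := Tuple.sort (repf A) with hτ
  set d : Fin N → ℂ := fun i => uf A (τ i) with hd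
  have hdabs : ∀ i, ‖d i‖ = 1 := fun i => uabs hA h01 h3 (τ i)
  have hdne : ∀ i, d i ≠ 0 := fun i => by
    intro h; have := hdabs i; rw [h] at this; simp at this
  refine ⟨Matrix.diagonal d, τ⁻¹, Matrix.isDiag_diagonal d, ?_, N,
    fun i => repf A (τ i), fun b => A b b, Tuple.monotone_sort (repf A),
    fun b => Ldiag hA h01 h3 b, ?_⟩
  · intro i; rw [Matrix.diagonal_apply_eq]; exact hdabs i
  set σ : Equiv.Perm (Fin N) := τ⁻¹ with hσ
  set Q : Matrix (Fin N) (Fin N) ℂ := σ.permMatrix ℂ with hQdef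
  have hQ : ∀ i j, Q i j = if σ i = j then 1 else 0 := by
    intro i j; simp [hQdef, Equiv.Perm.permMatrix, PEquiv.toMatrix, Equiv.toPEquiv]
  have hQD : ∀ i j, (Q * Matrix.diagonal d) i j = if σ i = j then d j else 0 := by
    intro i j; rw [Matrix.mul_diagonal, hQ]; simp [ite_mul]
  set E : Matrix (Fin N) (Fin N) ℂ := Matrix.of (fun i j => if τ i = j then (d i)⁻¹ else 0)
    with hEdef
  have hEapp : ∀ i j, E i j = if τ i = j then (d i)⁻¹ else 0 := fun i j => rfl
  have hrinv : (Q * Matrix.diagonal d) * E = 1 := by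
    ext i j
    rw [Matrix.mul_apply]
    rw [Fintype.sum_eq_single (σ i)
      (fun l hl => by rw [hQD, if_neg (fun h => hl h.symm), zero_mul])]
    rw [hQD, hEapp, if_pos rfl]
    have hτσ : τ (σ i) = i := by simp [hσ]
    rw [hτσ]
    rcases eq_or_ne i j with rfl | h
    · simp [Matrix.one_apply, mul_inv_cancel₀ (hdne (σ i))]
    · simp [Matrix.one_apply, h]
  have hinv : (Q * Matrix.diagonal d)⁻¹ = E := Matrix.inv_eq_right_inv hrinv
  intro i j
  rw [hinv]
  have hEA : ∀ l, (E * A) i l = (d i)⁻¹ * A (τ i) l := by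
    intro l
    rw [Matrix.mul_apply]
    rw [Fintype.sum_eq_single (τ i)
      (fun k hk => by rw [hEapp, if_neg (fun h => hk h.symm), zero_mul])]
    rw [hEapp, if_pos rfl]
  rw [Matrix.mul_apply]
  rw [Fintype.sum_eq_single (τ j)
    (fun l hl => by
      rw [hQD, if_neg (fun h => hl (by rw [← h, hσ]; simp)), mul_zero])]
  rw [hEA, hQD, if_pos (by simp [hσ])]
  have : (d i)⁻¹ * A (τ i) (τ j) * d j = (uf A (τ i))⁻¹ * A (τ i) (τ j) * uf A (τ j) := rfl
  rw [this, key hA h01 h3 (τ i) (τ j)]
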